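/- If F is a closed subset of M_T(X), then the set X(F) = ∪{B(μ) : μ ∈ F} of points whose empirical measures converge to some measure in F is a Borel subset of X. -/

import Mathlib

open MeasureTheory Filter Topology
open scoped ENNReal NNReal

/-- The empirical measure `δ_{x,n+1} = (δ_x + δ_{Tx} + ⋯ + δ_{Tⁿx})/(n+1)`. -/
noncomputable def emp {X : Type*} [MeasurableSpace X] (T : X → X) (x : X) (n : ℕ) :
    ProbabilityMeasure X :=
  ⟨((n + 1 : ℝ≥0∞))⁻¹ • ∑ i ∈ Finset.range (n + 1), Measure.dirac (T^[i] x), by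
    constructor
    simp [Measure.smul_apply, Measure.finset_sum_apply, ENNReal.inv_mul_cancel,
      (Nat.cast_add_one_ne_zero n)]⟩

section Aux

open Metric TopologicalSpace BoundedContinuousFunction

lemma emp_lintegral {X : Type*} [MeasurableSpace X] [TopologicalSpace X] [OpensMeasurableSpace X]
    (T : X → X) (hT : Continuous T) (x : X) (n : ℕ) (f : X →ᵇ ℝ≥0) :
    ∫⁻ ω, f ω ∂(emp T x n : Measure X)
      = ((n + 1 : ℝ≥0∞))⁻¹ * ∑ i ∈ Finset.range (n + 1), (f (T^[i] x) : ℝ≥0∞) := by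
  have hf : Measurable fun ω => (f ω : ℝ≥0∞) :=
    (ENNReal.continuous_coe.comp f.continuous).measurable
  show ∫⁻ ω, f ω ∂(((n + 1 : ℝ≥0∞))⁻¹ • ∑ i ∈ Finset.range (n + 1), Measure.dirac (T^[i] x))
      = _
  rw [lintegral_smul_measure, lintegral_finset_sum_measure]
  congr 1
  refine Finset.sum_congr rfl fun i _ => ?_
  exact lintegral_dirac' _ hf

lemma continuous_emp {X : Type*} [MeasurableSpace X] [TopologicalSpace X] [OpensMeasurableSpace X]
    (T : X → X) (hT : Continuous T) (n : ℕ) :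
    Continuous fun x => emp T x n := by
  rw [continuous_iff_continuousAt]
  intro x
  rw [ContinuousAt, MeasureTheory.ProbabilityMeasure.tendsto_iff_forall_lintegral_tendsto]
  intro f
  simp only [emp_lintegral T hT _ n f]
  refine ENNReal.Tendsto.const_mul ?_ (Or.inr (by simp [ENNReal.inv_ne_top]))
  refine tendsto_finset_sum _ fun i _ => ?_
  have : Continuous fun y => (f (T^[i] y) : ℝ≥0∞) :=
    ENNReal.continuous_coe.comp (f.continuous.comp (hT.iterate i))
  exact (this.tendsto x)


private lemma binf_le_liminf (u : ℕ → ℝ≥0∞) (p : ℕ) :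
    (⨅ k, ⨅ (_ : p ≤ k), u k) ≤ atTop.liminf u := by
  rw [liminf_eq_iSup_iInf_of_nat]
  exact le_iSup_of_le p le_rfl

private lemma ennreal_le_liminf_add (u v : ℕ → ℝ≥0∞) :
    atTop.liminf u + atTop.liminf v ≤ atTop.liminf (fun k => u k + v k) := by
  rw [liminf_eq_iSup_iInf_of_nat, liminf_eq_iSup_iInf_of_nat, liminf_eq_iSup_iInf_of_nat]
  rw [ENNReal.iSup_add_iSup (g := fun n => ⨅ i, ⨅ (_ : n ≤ i), v i) ?_]
  · refine iSup_le fun n => le_iSup_of_le n (le_iInf fun k => le_iInf fun hk => ?_)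
    exact add_le_add (iInf₂_le k hk) (iInf₂_le k hk)
  · intro i j
    refine ⟨max i j, add_le_add ?_ ?_⟩
    · exact le_iInf fun k => le_iInf fun hk => iInf₂_le k (le_trans (le_max_left i j) hk)
    · exact le_iInf fun k => le_iInf fun hk => iInf₂_le k (le_trans (le_max_right i j) hk)

private lemma ennreal_liminf_add_le (u v : ℕ → ℝ≥0∞) :
    atTop.liminf (fun k => u k + v k) ≤ atTop.limsup u + atTop.liminf v := by
  rw [liminf_eq_iSup_iInf_of_nat (u := fun k => u k + v k), limsup_eq_iInf_iSup_of_nat]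
  rw [ENNReal.iInf_add]
  refine iSup_le fun n => le_iInf fun m => ?_
  set p := max n m with hp
  have h1 : (⨅ k, ⨅ (_ : n ≤ k), (u k + v k)) ≤ ⨅ k, ⨅ (_ : p ≤ k), (u k + v k) :=
    le_iInf fun k => le_iInf fun hk => iInf₂_le k (le_trans (le_max_left n m) hk)
  refine h1.trans ?_
  have h2 : ∀ k, p ≤ k → u k + v k ≤ (⨆ i, ⨆ (_ : m ≤ i), u i) + v k := fun k hk =>
    add_le_add_left (le_iSup₂ (f := fun i (_ : m ≤ i) => u i) k
      (le_trans (le_max_right n m) hk)) _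
  have h3 : (⨅ k, ⨅ (_ : p ≤ k), (u k + v k))
      ≤ ⨅ k, ⨅ (_ : p ≤ k), ((⨆ i, ⨆ (_ : m ≤ i), u i) + v k) :=
    le_iInf fun k => le_iInf fun hk => iInf₂_le_of_le k hk (h2 k hk)
  refine h3.trans ?_
  have h4 : (⨅ k, ⨅ (_ : p ≤ k), ((⨆ i, ⨆ (_ : m ≤ i), u i) + v k))
      = (⨆ i, ⨆ (_ : m ≤ i), u i) + ⨅ k, ⨅ (_ : p ≤ k), v k := by
    rw [ENNReal.add_iInf]
    refine iInf_congr fun k => ?_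
    by_cases h : p ≤ k
    · simp only [iInf_pos h]
    · simp only [iInf_neg h, add_top]
  rw [h4]
  exact add_le_add_right (binf_le_liminf v p) _

variable {X : Type*} [MetricSpace X] [CompactSpace X] [MeasurableSpace X] [BorelSpace X]

lemma exists_tendsto_of_lpCauchy (μs : ℕ → ProbabilityMeasure X)
    (hc : ∀ ε : ℝ≥0∞, 0 < ε → ε < ⊤ →
      ∃ N : ℕ, ∀ j, N ≤ j → ∀ k, N ≤ k →
        levyProkhorovEDist (μs j : Measure X) (μs k) < ε) :
    ∃ ν : ProbabilityMeasure X, Tendsto μs atTop (𝓝 ν) := by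
  classical
  -- the candidate "limit" quantity
  set Lf : Set X → ℝ≥0∞ := fun A =>
    ⨅ (δ : ℝ) (_ : 0 < δ), atTop.liminf (fun k => (μs k : Measure X) (thickening δ A)) with hLf
  have hone : ∀ (A : Set X) (δ : ℝ),
      atTop.liminf (fun k => (μs k : Measure X) (thickening δ A)) ≤ 1 := by
    intro A δ
    refine le_trans (liminf_le_liminf (Eventually.of_forall fun k => prob_le_one)) ?_
    simp [liminf_const]
  have hLf_le_one : ∀ A : Set X, Lf A ≤ 1 := fun A =>
    le_trans (iInf₂_le (1 : ℝ) one_pos) (hone A 1)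
  have hLf_ne_top : ∀ A : Set X, Lf A ≠ ⊤ := fun A =>
    ne_top_of_le_ne_top (by simp) (hLf_le_one A)
  have hmono : ∀ {A B : Set X}, A ⊆ B → Lf A ≤ Lf B := by
    intro A B hAB
    refine le_iInf₂ fun δ hδ => le_trans (iInf₂_le δ hδ) ?_
    exact liminf_le_liminf (Eventually.of_forall fun k =>
      measure_mono (thickening_subset_of_subset δ hAB))
  -- bridging lemma from the Cauchy property
  have hbridge : ∀ (A : Set X) (ε : ℝ≥0∞), 0 < ε → ε < ⊤ → ∀ (δ : ℝ), 0 < δ →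
      atTop.limsup (fun k => (μs k : Measure X) (thickening δ A))
        ≤ atTop.liminf (fun k => (μs k : Measure X) (thickening (δ + ε.toReal) A)) + ε := by
    intro A ε hε hε' δ hδ
    obtain ⟨N, hN⟩ := hc ε hε hε'
    have key : ∀ j, N ≤ j →
        (μs j : Measure X) (thickening δ A)
          ≤ (⨅ k : {k : ℕ // N ≤ k},
              (μs k : Measure X) (thickening (δ + ε.toReal) A)) + ε := by
      intro j hj
      haveI : Nonempty {k : ℕ // N ≤ k} := ⟨⟨N, le_rfl⟩⟩
      rw [ENNReal.iInf_add]
      refine le_iInf fun k => ?_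
      have hlt := hN j hj k k.2
      have h1 := left_measure_le_of_levyProkhorovEDist_lt hlt
        (B := thickening δ A) isOpen_thickening.measurableSet
      refine h1.trans (add_le_add_left (measure_mono ?_) ε)
      refine (thickening_thickening_subset _ _ _).trans ?_
      rw [add_comm]
    refine limsup_le_of_le (by isBoundedDefault) (eventually_atTop.2 ⟨N, key⟩) |>.trans ?_
    gcongr
    rw [liminf_eq_iSup_iInf_of_nat]
    refine le_iSup_of_le N ?_
    exact le_iInf fun i => le_iInf fun hi => iInf_le_of_le (⟨i, hi⟩ : {k : ℕ // N ≤ k}) le_rfl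
  -- subadditivity
  have hliminf_mono : ∀ (A : Set X) {δ δ' : ℝ}, δ ≤ δ' →
      atTop.liminf (fun k => (μs k : Measure X) (thickening δ A))
        ≤ atTop.liminf (fun k => (μs k : Measure X) (thickening δ' A)) := by
    intro A δ δ' h
    exact liminf_le_liminf (Eventually.of_forall fun k =>
      measure_mono (thickening_mono h A))
  have hLf_le : ∀ (A : Set X) (δ : ℝ), 0 < δ →
      Lf A ≤ atTop.liminf (fun k => (μs k : Measure X) (thickening δ A)) :=
    fun A δ hδ => iInf₂_le δ hδ
  have hex : ∀ (K : Set X) (c : ℝ≥0∞), 0 < c → ∃ δ : ℝ, 0 < δ ∧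
      atTop.liminf (fun k => (μs k : Measure X) (thickening δ K)) ≤ Lf K + c := by
    intro K c hc
    have h : Lf K < Lf K + c := ENNReal.lt_add_right (hLf_ne_top K) hc.ne'
    conv_lhs at h => rw [hLf]
    simp only [iInf_lt_iff] at h
    obtain ⟨δ, hδ, hlt⟩ := h
    exact ⟨δ, hδ, hlt.le⟩
  have hsub : ∀ K₁ K₂ : Set X, Lf (K₁ ∪ K₂) ≤ Lf K₁ + Lf K₂ := by
    intro K₁ K₂
    refine ENNReal.le_of_forall_pos_le_add fun η hη hfin => ?_
    set c : ℝ≥0∞ := (η : ℝ≥0∞) / 3 with hc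
    have hc_pos : 0 < c := ENNReal.div_pos (by exact_mod_cast hη.ne') (by simp)
    have hc_top : c < ⊤ := by
      rw [hc]
      exact ENNReal.div_lt_top (by simp) (by norm_num)
    obtain ⟨δ₁, hδ₁, h₁⟩ := hex K₁ c hc_pos
    obtain ⟨δ₂, hδ₂, h₂⟩ := hex K₂ c hc_pos
    set ε : ℝ≥0∞ := min c (ENNReal.ofReal (δ₂ / 2)) with hε
    have hε_pos : 0 < ε := lt_min hc_pos (by positivity)
    have hε_top : ε < ⊤ := lt_of_le_of_lt (min_le_left _ _) hc_top
    have hε_le : ε.toReal ≤ δ₂ / 2 := by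
      have : ε ≤ ENNReal.ofReal (δ₂ / 2) := min_le_right _ _
      calc ε.toReal ≤ (ENNReal.ofReal (δ₂ / 2)).toReal :=
            ENNReal.toReal_mono (by simp) this
        _ ≤ δ₂ / 2 := by rw [ENNReal.toReal_ofReal (by positivity)]
    set δ : ℝ := min δ₁ (δ₂ / 2) with hδdef
    have hδ_pos : 0 < δ := lt_min hδ₁ (by positivity)
    have step1 : Lf (K₁ ∪ K₂)
        ≤ atTop.liminf (fun k => (μs k : Measure X) (thickening δ (K₁ ∪ K₂))) :=
      hLf_le _ δ hδ_pos
    have step2 : atTop.liminf (fun k => (μs k : Measure X) (thickening δ (K₁ ∪ K₂)))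
        ≤ atTop.liminf (fun k => (μs k : Measure X) (thickening δ K₂)
            + (μs k : Measure X) (thickening δ K₁)) := by
      refine liminf_le_liminf (Eventually.of_forall fun k => ?_)
      rw [thickening_union]
      exact (measure_union_le _ _).trans (le_of_eq (add_comm _ _))
    have step3 : atTop.liminf (fun k => (μs k : Measure X) (thickening δ K₂)
            + (μs k : Measure X) (thickening δ K₁))
        ≤ atTop.limsup (fun k => (μs k : Measure X) (thickening δ K₂))
          + atTop.liminf (fun k => (μs k : Measure X) (thickening δ K₁)) := by
      exact ennreal_liminf_add_le _ _
    have step4 : atTop.limsup (fun k => (μs k : Measure X) (thickening δ K₂))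
        ≤ atTop.liminf (fun k => (μs k : Measure X) (thickening (δ + ε.toReal) K₂)) + ε :=
      hbridge K₂ ε hε_pos hε_top δ hδ_pos
    have step5 : atTop.liminf (fun k => (μs k : Measure X) (thickening (δ + ε.toReal) K₂))
        ≤ Lf K₂ + c := by
      refine le_trans (hliminf_mono K₂ ?_) h₂
      calc δ + ε.toReal ≤ δ₂ / 2 + δ₂ / 2 :=
            add_le_add (min_le_right _ _) hε_le
        _ = δ₂ := by ring
    have step6 : atTop.liminf (fun k => (μs k : Measure X) (thickening δ K₁))
        ≤ Lf K₁ + c := le_trans (hliminf_mono K₁ (min_le_left _ _)) h₁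
    have hccc : c + c + c ≤ (η : ℝ≥0∞) := by
      have : c + c + c = 3 * c := by ring
      rw [this, hc, ENNReal.mul_div_cancel' (by norm_num) (by norm_num)]
    calc Lf (K₁ ∪ K₂)
        ≤ atTop.limsup (fun k => (μs k : Measure X) (thickening δ K₂))
          + atTop.liminf (fun k => (μs k : Measure X) (thickening δ K₁)) :=
          (step1.trans step2).trans step3
      _ ≤ (Lf K₂ + c + ε) + (Lf K₁ + c) :=
          add_le_add (le_trans step4 (add_le_add_left step5 ε)) step6
      _ ≤ Lf K₁ + Lf K₂ + (c + c + c) := by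
          have hε_le_c : ε ≤ c := min_le_left _ _
          calc (Lf K₂ + c + ε) + (Lf K₁ + c) ≤ (Lf K₂ + c + c) + (Lf K₁ + c) := by gcongr
            _ = Lf K₁ + Lf K₂ + (c + c + c) := by ring
      _ ≤ Lf K₁ + Lf K₂ + η := add_le_add_right hccc _
  -- additivity on disjoint compact sets
  have hdisj : ∀ K₁ K₂ : Set X, IsCompact K₁ → IsCompact K₂ → Disjoint K₁ K₂ →
      Lf (K₁ ∪ K₂) = Lf K₁ + Lf K₂ := by
    intro K₁ K₂ hK₁ hK₂ hd
    refine le_antisymm (hsub K₁ K₂) ?_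
    obtain ⟨δ₀, hδ₀, hdisj₀⟩ := hd.exists_thickenings hK₁ hK₂.isClosed
    refine le_iInf₂ fun δ hδ => ?_
    set δ' : ℝ := min δ δ₀ with hδ'def
    have hδ'_pos : 0 < δ' := lt_min hδ hδ₀
    have hmono' : atTop.liminf (fun k => (μs k : Measure X) (thickening δ' (K₁ ∪ K₂)))
        ≤ atTop.liminf (fun k => (μs k : Measure X) (thickening δ (K₁ ∪ K₂))) :=
      hliminf_mono _ (min_le_left _ _)
    refine le_trans ?_ hmono'
    have hdisj' : Disjoint (thickening δ' K₁) (thickening δ' K₂) :=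
      hdisj₀.mono (thickening_mono (min_le_right _ _) K₁)
        (thickening_mono (min_le_right _ _) K₂)
    have heq : ∀ k : ℕ, (μs k : Measure X) (thickening δ' (K₁ ∪ K₂))
        = (μs k : Measure X) (thickening δ' K₁) + (μs k : Measure X) (thickening δ' K₂) := by
      intro k
      rw [thickening_union]
      exact measure_union hdisj' isOpen_thickening.measurableSet
    calc Lf K₁ + Lf K₂
        ≤ atTop.liminf (fun k => (μs k : Measure X) (thickening δ' K₁))
          + atTop.liminf (fun k => (μs k : Measure X) (thickening δ' K₂)) :=
          add_le_add (hLf_le _ _ hδ'_pos) (hLf_le _ _ hδ'_pos)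
      _ ≤ atTop.liminf (fun k => (μs k : Measure X) (thickening δ' K₁)
          + (μs k : Measure X) (thickening δ' K₂)) := ennreal_le_liminf_add _ _
      _ = atTop.liminf (fun k => (μs k : Measure X) (thickening δ' (K₁ ∪ K₂))) := by
          refine liminf_congr (Eventually.of_forall fun k => ?_)
          rw [heq k]
  -- build the content
  set C : Content X :=
    { toFun := fun K => (Lf K).toNNReal
      mono' := fun K₁ K₂ h => ENNReal.toNNReal_mono (hLf_ne_top _) (hmono h)
      sup_disjoint' := by
        intro K₁ K₂ hd _ _
        show (Lf ((K₁ ⊔ K₂ : TopologicalSpace.Compacts X) : Set X)).toNNReal = _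
        rw [TopologicalSpace.Compacts.coe_sup, hdisj (↑K₁) (↑K₂) K₁.2 K₂.2 hd,
          ENNReal.toNNReal_add (hLf_ne_top _) (hLf_ne_top _)]
      sup_le' := by
        intro K₁ K₂
        show (Lf ((K₁ ⊔ K₂ : TopologicalSpace.Compacts X) : Set X)).toNNReal ≤ _
        rw [TopologicalSpace.Compacts.coe_sup]
        refine le_trans (ENNReal.toNNReal_mono ?_ (hsub K₁ K₂)) ?_
        · exact ENNReal.add_ne_top.2 ⟨hLf_ne_top _, hLf_ne_top _⟩
        · rw [ENNReal.toNNReal_add (hLf_ne_top _) (hLf_ne_top _)] } with hCdef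
  have hCK : ∀ K : TopologicalSpace.Compacts X, C K = Lf K := fun K =>
    ENNReal.coe_toNNReal (hLf_ne_top _)
  have hLf_univ : Lf (Set.univ : Set X) = 1 := by
    have hth : ∀ δ : ℝ, 0 < δ → thickening δ (Set.univ : Set X) = Set.univ := fun δ hδ =>
      Set.eq_univ_of_univ_subset (self_subset_thickening hδ _)
    refine le_antisymm (hLf_le_one _) ?_
    refine le_iInf₂ fun δ hδ => ?_
    rw [hth δ hδ]
    have : (fun k => (μs k : Measure X) Set.univ) = fun _ => (1 : ℝ≥0∞) := by
      funext k; simp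
    rw [this, liminf_const]
  have h_univ : C.measure Set.univ = 1 := by
    rw [C.measure_apply MeasurableSet.univ]
    have h1 : C.outerMeasure ((⊤ : TopologicalSpace.Opens X) : Set X)
        = C.innerContent ⊤ := C.outerMeasure_opens ⊤
    have h2 : ((⊤ : TopologicalSpace.Opens X) : Set X) = Set.univ := rfl
    rw [h2] at h1
    rw [h1]
    have h3 : C.innerContent ⊤
        = C ⟨Set.univ, isCompact_univ⟩ := by
      have := C.innerContent_of_isCompact (K := (Set.univ : Set X)) isCompact_univ isOpen_univ
      convert this using 2
      rfl
    rw [h3, hCK]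
    exact hLf_univ
  have h_opens : ∀ G : Set X, IsOpen G →
      C.measure G ≤ atTop.liminf (fun k => (μs k : Measure X) G) := by
    intro G hG
    rw [C.measure_apply hG.measurableSet]
    have h1 : C.outerMeasure G = C.innerContent ⟨G, hG⟩ := C.outerMeasure_opens ⟨G, hG⟩
    rw [h1, Content.innerContent]
    refine iSup₂_le fun K hK => ?_
    rw [hCK K]
    obtain ⟨δ, hδ, hsubset⟩ := K.2.exists_thickening_subset_open hG hK
    refine (hLf_le _ δ hδ).trans ?_
    exact liminf_le_liminf (Eventually.of_forall fun k => measure_mono hsubset)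
  refine ⟨⟨C.measure, ⟨h_univ⟩⟩, ?_⟩
  apply MeasureTheory.tendsto_of_forall_isOpen_le_liminf
  intro G hG
  have key := h_opens G hG
  have aux : (ENNReal.ofNNReal (atTop.liminf (fun i => μs i G)))
      = atTop.liminf (fun i => ((μs i G : ℝ≥0) : ℝ≥0∞)) := by
    refine Monotone.map_liminf_of_continuousAt (F := atTop) ENNReal.coe_mono
      (fun i => μs i G) ?_ ?_ ?_
    · exact ENNReal.continuous_coe.continuousAt
    · refine IsBoundedUnder.isCoboundedUnder_ge ⟨1, ?_⟩
      refine eventually_map.2 (Eventually.of_forall fun i => ?_)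
      exact (μs i).apply_le_one G
    · exact ⟨0, by simp⟩
  rw [← ENNReal.coe_le_coe, aux]
  simp only [ProbabilityMeasure.ennreal_coeFn_eq_coeFn_toMeasure]
  exact le_of_eq_of_le (ProbabilityMeasure.ennreal_coeFn_eq_coeFn_toMeasure _ _) key


lemma lp_completeSpace :
    CompleteSpace (LevyProkhorov (ProbabilityMeasure X)) := by
  refine Metric.complete_of_cauchySeq_tendsto fun u hu => ?_
  set μs : ℕ → ProbabilityMeasure X := fun k => LevyProkhorov.toMeasureEquiv (u k) with hμs
  have hc : ∀ ε : ℝ≥0∞, 0 < ε → ε < ⊤ →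
      ∃ N : ℕ, ∀ j, N ≤ j → ∀ k, N ≤ k →
        levyProkhorovEDist (μs j : Measure X) (μs k) < ε := by
    intro ε hε hε'
    obtain ⟨N, hN⟩ := Metric.cauchySeq_iff.mp hu ε.toReal (ENNReal.toReal_pos hε.ne' hε'.ne)
    refine ⟨N, fun j hj k hk => ?_⟩
    have := hN j hj k hk
    rw [LevyProkhorov.dist_probabilityMeasure_def, levyProkhorovDist] at this
    exact (ENNReal.toReal_lt_toReal (levyProkhorovEDist_ne_top _ _) hε'.ne).mp this
  obtain ⟨ν, hν⟩ := exists_tendsto_of_lpCauchy μs hc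
  refine ⟨LevyProkhorov.toMeasureEquiv.symm ν, ?_⟩
  have hcont := (LevyProkhorov.probabilityMeasureHomeomorph (Ω := X)).continuous
  exact (hcont.tendsto ν).comp hν

theorem basin_union_closed_borel_aux (T : X → X) (hT : Continuous T)
    (F : Set (ProbabilityMeasure X)) (hF : IsClosed F)
    (hFinv : ∀ μ ∈ F, (μ : Measure X).map T = μ) :
    MeasurableSet {x : X | ∃ μ ∈ F, Tendsto (fun n => emp T x n) atTop (𝓝 μ)} := by
  classical
  rcases F.eq_empty_or_nonempty with hFe | hFne
  · have : {x : X | ∃ μ ∈ F, Tendsto (fun n => emp T x n) atTop (𝓝 μ)} = ∅ := by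
      ext x; simp [hFe]
    rw [this]; exact MeasurableSet.empty
  haveI : CompleteSpace (LevyProkhorov (ProbabilityMeasure X)) := lp_completeSpace
  set φ := LevyProkhorov.probabilityMeasureHomeomorph (Ω := X) with hφ
  set u : X → ℕ → LevyProkhorov (ProbabilityMeasure X) := fun x n => φ (emp T x n) with hu
  set F' : Set (LevyProkhorov (ProbabilityMeasure X)) := φ '' F with hF'
  have hF'c : IsClosed F' := (φ.isClosedMap F hF)
  have hF'ne : F'.Nonempty := hFne.image φ
  have hucont : ∀ n, Continuous fun x => u x n := fun n =>
    φ.continuous.comp (continuous_emp T hT n)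
  -- the key pointwise characterization
  have hiff : ∀ x : X,
      (∃ μ ∈ F, Tendsto (fun n => emp T x n) atTop (𝓝 μ)) ↔
      (CauchySeq (u x) ∧
        Tendsto (fun n => Metric.infDist (u x n) F') atTop (𝓝 0)) := by
    intro x
    constructor
    · rintro ⟨μ, hμF, hconv⟩
      have h1 : Tendsto (u x) atTop (𝓝 (φ μ)) := (φ.continuous.tendsto μ).comp hconv
      refine ⟨h1.cauchySeq, ?_⟩
      have h2 : Tendsto (fun n => Metric.infDist (u x n) F') atTop
          (𝓝 (Metric.infDist (φ μ) F')) :=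
        ((Metric.continuous_infDist_pt F').tendsto (φ μ)).comp h1
      rwa [Metric.infDist_zero_of_mem (Set.mem_image_of_mem φ hμF)] at h2
    · rintro ⟨hC, hI⟩
      obtain ⟨ν, hν⟩ := cauchySeq_tendsto_of_complete hC
      have h2 : Tendsto (fun n => Metric.infDist (u x n) F') atTop
          (𝓝 (Metric.infDist ν F')) :=
        ((Metric.continuous_infDist_pt F').tendsto ν).comp hν
      have h3 : Metric.infDist ν F' = 0 := tendsto_nhds_unique h2 hI
      have h4 : ν ∈ F' := (hF'c.mem_iff_infDist_zero hF'ne).mpr h3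
      obtain ⟨μ, hμF, hμν⟩ := h4
      refine ⟨μ, hμF, ?_⟩
      have h5 : Tendsto (fun n => φ.symm (u x n)) atTop (𝓝 (φ.symm ν)) :=
        (φ.symm.continuous.tendsto ν).comp hν
      have h6 : ∀ n, φ.symm (u x n) = emp T x n := fun n => φ.symm_apply_apply _
      rw [← hμν, funext h6] at h5
      simpa [φ.symm_apply_apply] using h5
  have hset : {x : X | ∃ μ ∈ F, Tendsto (fun n => emp T x n) atTop (𝓝 μ)}
      = {x : X | CauchySeq (u x)} ∩
        {x : X | Tendsto (fun n => Metric.infDist (u x n) F') atTop (𝓝 0)} := by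
    ext x
    simpa using hiff x
  rw [hset]
  have m1 : MeasurableSet {x : X | CauchySeq (u x)} := by
    have hchar : {x : X | CauchySeq (u x)} = ⋂ j : ℕ, ⋃ N : ℕ, ⋂ m : ℕ, ⋂ n : ℕ,
        {x : X | N ≤ m → N ≤ n → dist (u x m) (u x n) < 1 / (j + 1)} := by
      ext x
      simp only [Set.mem_setOf_eq, Set.mem_iInter, Set.mem_iUnion]
      constructor
      · intro h j
        obtain ⟨N, hN⟩ := Metric.cauchySeq_iff.mp h (1 / (j + 1 : ℝ)) (by positivity)
        exact ⟨N, fun m n hm hn => hN m hm n hn⟩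
      · intro h
        refine Metric.cauchySeq_iff.mpr fun ε hε => ?_
        obtain ⟨j, hj⟩ := exists_nat_one_div_lt hε
        obtain ⟨N, hN⟩ := h j
        exact ⟨N, fun m hm n hn => (hN m n hm hn).trans hj⟩
    rw [hchar]
    refine MeasurableSet.iInter fun j => MeasurableSet.iUnion fun N =>
      MeasurableSet.iInter fun m => MeasurableSet.iInter fun n => ?_
    by_cases hm : N ≤ m
    · by_cases hn : N ≤ n
      · have : {x : X | N ≤ m → N ≤ n → dist (u x m) (u x n) < 1 / (j + 1)}
            = {x : X | dist (u x m) (u x n) < 1 / (j + 1)} := by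
          ext x; simp [hm, hn]
        rw [this]
        exact (isOpen_lt ((hucont m).dist (hucont n)) continuous_const).measurableSet
      · have : {x : X | N ≤ m → N ≤ n → dist (u x m) (u x n) < 1 / (j + 1)} = Set.univ := by
          ext x; simp [hn]
        rw [this]; exact MeasurableSet.univ
    · have : {x : X | N ≤ m → N ≤ n → dist (u x m) (u x n) < 1 / (j + 1)} = Set.univ := by
        ext x; simp [hm]
      rw [this]; exact MeasurableSet.univ
  have m2 : MeasurableSet
      {x : X | Tendsto (fun n => Metric.infDist (u x n) F') atTop (𝓝 0)} := by
    have hchar : {x : X | Tendsto (fun n => Metric.infDist (u x n) F') atTop (𝓝 0)}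
        = ⋂ j : ℕ, ⋃ N : ℕ, ⋂ n : ℕ,
          {x : X | N ≤ n → Metric.infDist (u x n) F' < 1 / (j + 1)} := by
      ext x
      simp only [Set.mem_setOf_eq, Set.mem_iInter, Set.mem_iUnion]
      constructor
      · intro h j
        obtain ⟨N, hN⟩ := (Metric.tendsto_atTop.mp h) (1 / (j + 1 : ℝ)) (by positivity)
        refine ⟨N, fun n hn => ?_⟩
        have := hN n hn
        rwa [Real.dist_eq, sub_zero,
          abs_of_nonneg (Metric.infDist_nonneg)] at this
      · intro h
        refine Metric.tendsto_atTop.mpr fun ε hε => ?_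
        obtain ⟨j, hj⟩ := exists_nat_one_div_lt hε
        obtain ⟨N, hN⟩ := h j
        refine ⟨N, fun n hn => ?_⟩
        rw [Real.dist_eq, sub_zero, abs_of_nonneg (Metric.infDist_nonneg)]
        exact (hN n hn).trans hj
    rw [hchar]
    refine MeasurableSet.iInter fun j => MeasurableSet.iUnion fun N =>
      MeasurableSet.iInter fun n => ?_
    by_cases hn : N ≤ n
    · have : {x : X | N ≤ n → Metric.infDist (u x n) F' < 1 / (j + 1)}
          = {x : X | Metric.infDist (u x n) F' < 1 / (j + 1)} := by
        ext x; simp [hn]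
      rw [this]
      exact (isOpen_lt ((Metric.continuous_infDist_pt F').comp (hucont n))
        continuous_const).measurableSet
    · have : {x : X | N ≤ n → Metric.infDist (u x n) F' < 1 / (j + 1)} = Set.univ := by
        ext x; simp [hn]
      rw [this]; exact MeasurableSet.univ
  exact m1.inter m2

end Aux

/-- If F is a closed set of invariant measures, then X(F) = ∪{B(μ) : μ ∈ F}
is Borel. -/
theorem basin_union_closed_borel {X : Type*} [MetricSpace X] [CompactSpace X]
    [MeasurableSpace X] [BorelSpace X] (T : X → X) (hT : Continuous T)
    (F : Set (ProbabilityMeasure X)) (hF : IsClosed F)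
    (hFinv : ∀ μ ∈ F, (μ : Measure X).map T = μ) :
    MeasurableSet {x : X | ∃ μ ∈ F, Tendsto (fun n => emp T x n) atTop (𝓝 μ)} := by
  exact basin_union_closed_borel_aux T hT F hF hFinv
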